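/- For β₁ ∈ ℝ, β₁ ≠ 0, the rational function q(x,t) = 4β₁ exp( −2 i β₁² (2tβ₁² − x) ) / ( 1 + 4 i β₁² x − 16 i β₁⁴ t ) satisfies the DNLSII equation i q_t + q_xx + i |q|² q_x = 0 wherever the denominator is nonzero. -/

import Mathlib

open Complex

noncomputable def px (q : ℝ → ℝ → ℂ) : ℝ → ℝ → ℂ :=
  fun x t => deriv (fun x' => q x' t) x

noncomputable def pt (q : ℝ → ℝ → ℂ) : ℝ → ℝ → ℂ :=
  fun x t => deriv (fun t' => q x t') t

noncomputable def Dd (b : ℂ) (t : ℝ) (x : ℝ) : ℂ :=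
  1 + 4*Complex.I*b^2*(x:ℂ) - 16*Complex.I*b^4*(t:ℂ)

noncomputable def Ee (b : ℂ) (t : ℝ) (x : ℝ) : ℂ :=
  -2*Complex.I*b^2*(2*(t:ℂ)*b^2 - (x:ℂ))

noncomputable def Qq (b : ℂ) (t : ℝ) (x : ℝ) : ℂ :=
  4*b*Complex.exp (Ee b t x) / Dd b t x

noncomputable def Qx (b : ℂ) (t : ℝ) (x : ℝ) : ℂ :=
  (4*b*(Complex.exp (Ee b t x)*(2*Complex.I*b^2)) * Dd b t x
    - 4*b*Complex.exp (Ee b t x) * (4*Complex.I*b^2)) / (Dd b t x * Dd b t x)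

lemma hasDerivAt_ofReal (x : ℝ) : HasDerivAt (fun x' : ℝ => (x' : ℂ)) 1 x := by
  have h := Complex.ofRealCLM.hasDerivAt (x := x); simp at h; exact h

lemma hasDerivAt_D (b : ℂ) (t x : ℝ) :
    HasDerivAt (fun x' => Dd b t x') (4*Complex.I*b^2) x := by
  have h := (((hasDerivAt_ofReal x).const_mul (4*Complex.I*b^2)).const_add 1).sub_const
      (16*Complex.I*b^4*(t:ℂ))
  have hfun : (fun x' => Dd b t x')
      = (fun y : ℝ => 1 + 4*Complex.I*b^2*(y:ℂ) - 16*Complex.I*b^4*(t:ℂ)) := by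
    funext y; simp [Dd]
  rw [hfun]; exact h.congr_deriv (by ring)

lemma hasDerivAt_E (b : ℂ) (t x : ℝ) :
    HasDerivAt (fun x' => Ee b t x') (2*Complex.I*b^2) x := by
  have h := ((hasDerivAt_ofReal x).const_sub (2*(t:ℂ)*b^2)).const_mul (-2*Complex.I*b^2)
  have hfun : (fun x' => Ee b t x')
      = (fun y : ℝ => -2*Complex.I*b^2*(2*(t:ℂ)*b^2 - (y:ℂ))) := by
    funext y; simp [Ee]
  rw [hfun]; exact h.congr_deriv (by ring)

lemma hasDerivAt_Dt (b : ℂ) (x t : ℝ) :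
    HasDerivAt (fun t' => Dd b t' x) (-16*Complex.I*b^4) t := by
  have h := ((hasDerivAt_ofReal t).const_mul (16*Complex.I*b^4)).const_sub
      (1 + 4*Complex.I*b^2*(x:ℂ))
  have hfun : (fun t' : ℝ => Dd b t' x)
      = (fun y : ℝ => (1 + 4*Complex.I*b^2*(x:ℂ)) - 16*Complex.I*b^4*(y:ℂ)) := by
    funext y; simp [Dd]
  rw [hfun]; exact h.congr_deriv (by ring)

lemma hasDerivAt_Et (b : ℂ) (x t : ℝ) :
    HasDerivAt (fun t' => Ee b t' x) (-4*Complex.I*b^4) t := by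
  have h := (((hasDerivAt_ofReal t).const_mul (2*b^2)).sub_const ((x:ℂ))).const_mul
      (-2*Complex.I*b^2)
  have hfun : (fun t' : ℝ => Ee b t' x)
      = (fun y : ℝ => -2*Complex.I*b^2*(2*b^2*(y:ℂ) - (x:ℂ))) := by
    funext y; simp only [Ee]; ring
  rw [hfun]; exact h.congr_deriv (by ring)

lemma Dd_re (β t x : ℝ) : (Dd (β:ℂ) t x).re = 1 := by
  simp [Dd, Complex.add_re, Complex.sub_re, Complex.mul_re, Complex.mul_im,
    ← Complex.ofReal_pow]

lemma Dd_ne (β t x : ℝ) : Dd (β:ℂ) t x ≠ 0 := by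
  intro h
  have := congrArg Complex.re h
  rw [Dd_re] at this
  simp at this

lemma Dd_conj (β t x : ℝ) : (starRingEnd ℂ) (Dd (β:ℂ) t x) = 2 - Dd (β:ℂ) t x := by
  simp only [Dd, map_sub, map_add, map_mul, map_one, map_ofNat, map_pow,
    Complex.conj_I, Complex.conj_ofReal]
  ring

lemma Dd_conj_ne (β t x : ℝ) : (2 : ℂ) - Dd (β:ℂ) t x ≠ 0 := by
  rw [← Dd_conj]
  simpa using Dd_ne β t x

lemma Ee_conj (β t x : ℝ) : (starRingEnd ℂ) (Ee (β:ℂ) t x) = - Ee (β:ℂ) t x := by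
  simp only [Ee, map_mul, map_sub, map_neg, map_ofNat, map_pow,
    Complex.conj_I, Complex.conj_ofReal]
  ring

lemma hasDerivAt_Q (b : ℂ) (t x : ℝ) (h : Dd b t x ≠ 0) :
    HasDerivAt (fun x' => Qq b t x') (Qx b t x) x := by
  have h1 := (((hasDerivAt_E b t x).cexp).const_mul (4*b)).div (hasDerivAt_D b t x) h
  have hfun : (fun x' : ℝ => Qq b t x')
      = (fun x' => 4*b*Complex.exp (Ee b t x') / Dd b t x') := by
    funext y; simp only [Qq]
  rw [hfun]
  refine h1.congr_deriv ?_
  simp only [Qx]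
  ring

lemma hasDerivAt_Qt (b : ℂ) (x t : ℝ) (h : Dd b t x ≠ 0) :
    HasDerivAt (fun t' => Qq b t' x)
      ((4*b*(Complex.exp (Ee b t x)*(-4*Complex.I*b^4)) * Dd b t x
        - 4*b*Complex.exp (Ee b t x) * (-16*Complex.I*b^4)) / Dd b t x ^ 2) t := by
  have h1 := (((hasDerivAt_Et b x t).cexp).const_mul (4*b)).div (hasDerivAt_Dt b x t) h
  have hfun : (fun t' : ℝ => Qq b t' x)
      = (fun t' => 4*b*Complex.exp (Ee b t' x) / Dd b t' x) := by
    funext y; simp only [Qq]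
  rw [hfun]
  exact h1.congr_deriv (by ring)

lemma hasDerivAt_Qxx (b : ℂ) (t x : ℝ) (h : Dd b t x ≠ 0) :
    HasDerivAt (fun x' => Qx b t x')
      (((4*b*((Complex.exp (Ee b t x)*(2*Complex.I*b^2))*(2*Complex.I*b^2)) * Dd b t x
          + 4*b*(Complex.exp (Ee b t x)*(2*Complex.I*b^2)) * (4*Complex.I*b^2)
          - 4*b*(Complex.exp (Ee b t x)*(2*Complex.I*b^2)) * (4*Complex.I*b^2))
            * (Dd b t x * Dd b t x)
        - (4*b*(Complex.exp (Ee b t x)*(2*Complex.I*b^2)) * Dd b t x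
            - 4*b*Complex.exp (Ee b t x) * (4*Complex.I*b^2))
          * (4*Complex.I*b^2 * Dd b t x + Dd b t x * (4*Complex.I*b^2)))
        / (Dd b t x * Dd b t x) ^ 2) x := by
  have hu1 : HasDerivAt (fun x' => 4*b*(Complex.exp (Ee b t x')*(2*Complex.I*b^2)))
      (4*b*((Complex.exp (Ee b t x)*(2*Complex.I*b^2))*(2*Complex.I*b^2))) x := by
    have h0 := (((hasDerivAt_E b t x).cexp).mul_const (2*Complex.I*b^2)).const_mul (4*b)
    convert h0 using 1 <;> ring
  have hu2 := hu1.mul (hasDerivAt_D b t x)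
  have hu3 : HasDerivAt (fun x' => 4*b*Complex.exp (Ee b t x') * (4*Complex.I*b^2))
      (4*b*(Complex.exp (Ee b t x)*(2*Complex.I*b^2)) * (4*Complex.I*b^2)) x := by
    have h0 := (((hasDerivAt_E b t x).cexp).const_mul (4*b)).mul_const (4*Complex.I*b^2)
    convert h0 using 1 <;> ring
  have hu := hu2.sub hu3
  have hv := (hasDerivAt_D b t x).mul (hasDerivAt_D b t x)
  have hdiv := hu.div hv (mul_ne_zero h h)
  have hfun : (fun x' : ℝ => Qx b t x')
      = (fun x' => (4*b*(Complex.exp (Ee b t x')*(2*Complex.I*b^2)) * Dd b t x'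
          - 4*b*Complex.exp (Ee b t x') * (4*Complex.I*b^2)) / (Dd b t x' * Dd b t x')) := by
    funext y; simp only [Qx]
  rw [hfun]
  exact hdiv.congr_deriv (by simp only [Pi.mul_apply, Pi.sub_apply])

/-- The rational single-soliton
`q = 4β₁ exp(−2iβ₁²(2tβ₁² − x)) / (1 + 4iβ₁²x − 16iβ₁⁴t)` solves the DNLSII
equation wherever the denominator is nonzero. -/
theorem rational_soliton_solves_dnlsII (β₁ : ℝ) (hβ : β₁ ≠ 0) (q : ℝ → ℝ → ℂ)
    (hq : ∀ x t, q x t =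
      4 * (β₁:ℂ) * Complex.exp (-2 * Complex.I * (β₁:ℂ)^2 * (2 * (t:ℂ) * (β₁:ℂ)^2 - (x:ℂ)))
        / (1 + 4 * Complex.I * (β₁:ℂ)^2 * (x:ℂ) - 16 * Complex.I * (β₁:ℂ)^4 * (t:ℂ))) :
    ∀ x t : ℝ,
      (1 + 4 * Complex.I * (β₁:ℂ)^2 * (x:ℂ) - 16 * Complex.I * (β₁:ℂ)^4 * (t:ℂ)) ≠ 0 →
      Complex.I * pt q x t + px (px q) x t
        + Complex.I * ((‖q x t‖ : ℝ) : ℂ)^2 * px q x t = 0 := by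
  intro x t _
  have hq' : ∀ x' t', q x' t' = Qq (β₁:ℂ) t' x' := by
    intro x' t'; rw [hq]; simp only [Qq, Ee, Dd]
  -- first x-derivative
  have hpx : ∀ x' t', px q x' t' = Qx (β₁:ℂ) t' x' := by
    intro x' t'
    have h0 : px q x' t' = deriv (fun y => q y t') x' := rfl
    have hfun : (fun y => q y t') = (fun y => Qq (β₁:ℂ) t' y) := funext fun y => hq' y t'
    rw [h0, hfun]
    exact (hasDerivAt_Q (β₁:ℂ) t' x' (Dd_ne β₁ t' x')).deriv
  -- second x-derivative
  have hpxx : px (px q) x t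
      = ((4*(β₁:ℂ)*((Complex.exp (Ee (β₁:ℂ) t x)*(2*Complex.I*(β₁:ℂ)^2))*(2*Complex.I*(β₁:ℂ)^2)) * Dd (β₁:ℂ) t x
          + 4*(β₁:ℂ)*(Complex.exp (Ee (β₁:ℂ) t x)*(2*Complex.I*(β₁:ℂ)^2)) * (4*Complex.I*(β₁:ℂ)^2)
          - 4*(β₁:ℂ)*(Complex.exp (Ee (β₁:ℂ) t x)*(2*Complex.I*(β₁:ℂ)^2)) * (4*Complex.I*(β₁:ℂ)^2))
            * (Dd (β₁:ℂ) t x * Dd (β₁:ℂ) t x)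
        - (4*(β₁:ℂ)*(Complex.exp (Ee (β₁:ℂ) t x)*(2*Complex.I*(β₁:ℂ)^2)) * Dd (β₁:ℂ) t x
            - 4*(β₁:ℂ)*Complex.exp (Ee (β₁:ℂ) t x) * (4*Complex.I*(β₁:ℂ)^2))
          * (4*Complex.I*(β₁:ℂ)^2 * Dd (β₁:ℂ) t x + Dd (β₁:ℂ) t x * (4*Complex.I*(β₁:ℂ)^2)))
        / (Dd (β₁:ℂ) t x * Dd (β₁:ℂ) t x) ^ 2 := by
    have h0 : px (px q) x t = deriv (fun x' => px q x' t) x := rfl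
    have hfun : (fun x' => px q x' t) = (fun x' => Qx (β₁:ℂ) t x') := funext fun y => hpx y t
    rw [h0, hfun]
    exact (hasDerivAt_Qxx (β₁:ℂ) t x (Dd_ne β₁ t x)).deriv
  -- t-derivative
  have hpt : pt q x t
      = (4*(β₁:ℂ)*(Complex.exp (Ee (β₁:ℂ) t x)*(-4*Complex.I*(β₁:ℂ)^4)) * Dd (β₁:ℂ) t x
        - 4*(β₁:ℂ)*Complex.exp (Ee (β₁:ℂ) t x) * (-16*Complex.I*(β₁:ℂ)^4)) / Dd (β₁:ℂ) t x ^ 2 := by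
    have h0 : pt q x t = deriv (fun t' => q x t') t := rfl
    have hfun : (fun t' => q x t') = (fun t' => Qq (β₁:ℂ) t' x) := funext fun y => hq' x y
    rw [h0, hfun]
    exact (hasDerivAt_Qt (β₁:ℂ) x t (Dd_ne β₁ t x)).deriv
  have he : Complex.exp (Ee (β₁:ℂ) t x) ≠ 0 := Complex.exp_ne_zero _
  have hd : Dd (β₁:ℂ) t x ≠ 0 := Dd_ne β₁ t x
  have h2d : (2:ℂ) - Dd (β₁:ℂ) t x ≠ 0 := Dd_conj_ne β₁ t x
  -- modulus squared
  have habs : ((‖q x t‖ : ℝ) : ℂ)^2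
      = 16 * (β₁:ℂ)^2 / (Dd (β₁:ℂ) t x * (2 - Dd (β₁:ℂ) t x)) := by
    rw [← Complex.ofReal_pow, ← Complex.normSq_eq_norm_sq, ← Complex.mul_conj]
    rw [hq' x t]
    simp only [Qq, map_div₀, map_mul, map_ofNat, Complex.conj_ofReal,
      ← Complex.exp_conj, Ee_conj, Dd_conj]
    rw [Complex.exp_neg]
    field_simp
    ring
  rw [hpxx, hpt, hpx, habs]
  simp only [Qx]
  field_simp
  ring_nf
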